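/- For integers n, k, i with n - k < i ≤ n and k ≤ n/4, the probability that bit-wise mutation with rate 1/n turns a string with i one-bits into one with exactly n-k one-bits by flipping exactly i-(n-k) one-bits is C(i, i-(n-k))·(1/n)^{i-(n-k)}·(1-1/n)^{n-(i-(n-k))} ≥ (1/e)·(3/(4k))^k. -/

import Mathlib

lemma aux_pow_le_choose (i j : ℕ) (hj : j ≤ i) :
    i ^ j * j.factorial ≤ i.descFactorial j * j ^ j := by
  calc i ^ j * j.factorial
      = ∏ m ∈ Finset.range j, (i * (j - m)) := by
        rw [Finset.prod_mul_distrib, Finset.prod_const, Finset.card_range,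
          ← Nat.descFactorial_eq_prod_range, Nat.descFactorial_self]
    _ ≤ ∏ m ∈ Finset.range j, ((i - m) * j) := by
        apply Finset.prod_le_prod'
        intro m hm
        rw [Nat.mul_sub, Nat.sub_mul, Nat.mul_comm m j]
        exact Nat.sub_le_sub_left (Nat.mul_le_mul_right m hj) (i * j)
    _ = i.descFactorial j * j ^ j := by
        rw [Finset.prod_mul_distrib, Finset.prod_const, Finset.card_range,
          ← Nat.descFactorial_eq_prod_range]

lemma aux_choose_lb (i j : ℕ) (hj0 : 0 < j) (hj : j ≤ i) :
    ((i : ℝ) / j) ^ j ≤ (i.choose j : ℝ) := by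
  have hjR : (0:ℝ) < (j : ℝ) := by positivity
  have hfac : (0:ℝ) < (j.factorial : ℝ) := by positivity
  rw [div_pow, div_le_iff₀ (by positivity)]
  have key := aux_pow_le_choose i j hj
  have hdesc : i.descFactorial j = j.factorial * i.choose j :=
    Nat.descFactorial_eq_factorial_mul_choose i j
  rw [hdesc] at key
  have : (i:ℝ)^j * j.factorial ≤ (j.factorial * i.choose j : ℕ) * (j:ℝ)^j := by
    calc (i:ℝ)^j * j.factorial = ((i^j * j.factorial : ℕ) : ℝ) := by push_cast; ring
      _ ≤ ((j.factorial * i.choose j * j^j : ℕ) : ℝ) := by exact_mod_cast key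
      _ = ((j.factorial * i.choose j : ℕ) : ℝ) * (j:ℝ)^j := by push_cast; ring
  push_cast at this
  nlinarith [this, pow_pos hjR j]

lemma aux_exp_lb (n : ℕ) (hn : 2 ≤ n) :
    1 / Real.exp 1 ≤ (1 - 1 / (n : ℝ)) ^ (n - 1) := by
  have hnR : (1:ℝ) < (n : ℝ) := by exact_mod_cast hn.trans_lt' one_lt_two
  have h1 : Real.exp (-(1 / ((n:ℝ) - 1))) ≤ 1 - 1 / (n : ℝ) := by
    have hpos : (0:ℝ) < (n:ℝ) - 1 := by linarith
    have h2 : 1 + 1 / ((n:ℝ) - 1) ≤ Real.exp (1 / ((n:ℝ) - 1)) :=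
      Real.add_one_le_exp _ |>.trans_eq' (by ring)
    have h3 : 1 - 1/(n:ℝ) = (1 + 1/((n:ℝ)-1))⁻¹ := by
      field_simp
      ring
    rw [h3, Real.exp_neg]
    exact inv_anti₀ (by positivity) h2
  have hcast : ((n - 1 : ℕ) : ℝ) = (n:ℝ) - 1 := by
    push_cast [Nat.cast_sub (by omega : 1 ≤ n)]; ring
  have hne : (n:ℝ) - 1 ≠ 0 := by linarith
  calc (1 / Real.exp 1) = Real.exp (-1) := by rw [Real.exp_neg, one_div]
    _ = Real.exp (((n - 1 : ℕ) : ℝ) * (-(1 / ((n:ℝ) - 1)))) := by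
        congr 1
        rw [hcast]
        field_simp
    _ = Real.exp (-(1 / ((n:ℝ) - 1))) ^ (n - 1) := by
        rw [← Real.exp_nat_mul]
    _ ≤ (1 - 1 / (n : ℝ)) ^ (n - 1) :=
        pow_le_pow_left₀ (Real.exp_nonneg _) h1 _



/-- The probability that bit-wise mutation with rate 1/n turns a string with
`i > n-k` one-bits into one with exactly `n-k` one-bits (flipping exactly
`i-(n-k)` one-bits and nothing else) is at least `(1/e)·(3/(4k))^k`. -/
theorem stmt_17 (n k i : ℕ) (hk : 4 * k ≤ n) (hi1 : n - k < i) (hi2 : i ≤ n) :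
    (1 / Real.exp 1) * (3 / (4 * (k : ℝ))) ^ k ≤
      (i.choose (i - (n - k)) : ℝ) * (1 / (n : ℝ)) ^ (i - (n - k)) *
        (1 - 1 / (n : ℝ)) ^ (n - (i - (n - k))) := by
  set j := i - (n - k) with hj
  have hk1 : 1 ≤ k := by omega
  have hn4 : 4 ≤ n := by omega
  have hj1 : 1 ≤ j := by omega
  have hjk : j ≤ k := by omega
  have hji : j ≤ i := by omega
  have hnR : (0:ℝ) < (n:ℝ) := by positivity
  have hjR : (0:ℝ) < (j:ℝ) := by exact_mod_cast hj1
  have hkR : (0:ℝ) < (k:ℝ) := by exact_mod_cast hk1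
  -- i/n ≥ 3/4
  have h4i : 3 * n ≤ 4 * i := by omega
  -- step 1: choose * (1/n)^j ≥ (3/(4j))^j
  have step1 : (3 / (4 * (j:ℝ))) ^ j ≤ (i.choose j : ℝ) * (1 / (n : ℝ)) ^ j := by
    have h1 : ((i:ℝ) / j) ^ j ≤ (i.choose j : ℝ) := aux_choose_lb i j hj1 hji
    have h2 : (3 / (4 * (j:ℝ))) ≤ ((i:ℝ)/j) * (1/(n:ℝ)) := by
      rw [div_le_iff₀ (by positivity)]
      have : (3:ℝ) * n ≤ 4 * i := by exact_mod_cast h4i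
      have hexp : (i:ℝ)/j * (1/n) * (4 * j) = 4 * i / n := by
        field_simp
      rw [hexp, le_div_iff₀ hnR]
      linarith
    calc (3 / (4 * (j:ℝ))) ^ j ≤ ((i:ℝ)/j * (1/(n:ℝ))) ^ j :=
          pow_le_pow_left₀ (by positivity) h2 j
      _ = ((i:ℝ)/j)^j * (1/(n:ℝ))^j := mul_pow _ _ _
      _ ≤ (i.choose j : ℝ) * (1 / (n : ℝ)) ^ j := by
          apply mul_le_mul_of_nonneg_right h1 (by positivity)
  -- step 2: (3/(4k))^k ≤ (3/(4j))^j
  have step2 : (3 / (4 * (k:ℝ))) ^ k ≤ (3 / (4 * (j:ℝ))) ^ j := by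
    calc (3 / (4 * (k:ℝ))) ^ k ≤ (3 / (4 * (k:ℝ))) ^ j := by
          apply pow_le_pow_of_le_one (by positivity) _ hjk
          rw [div_le_one (by positivity)]
          have hk1R : (1:ℝ) ≤ (k:ℝ) := by exact_mod_cast hk1
          linarith
      _ ≤ (3 / (4 * (j:ℝ))) ^ j := by
          apply pow_le_pow_left₀ (by positivity)
          apply div_le_div_of_nonneg_left (by norm_num) (by positivity)
          have : (j:ℝ) ≤ (k:ℝ) := by exact_mod_cast hjk
          linarith
  -- step 3
  have step3 : 1 / Real.exp 1 ≤ (1 - 1 / (n : ℝ)) ^ (n - j) := by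
    have h := aux_exp_lb n (by omega)
    calc 1 / Real.exp 1 ≤ (1 - 1 / (n : ℝ)) ^ (n - 1) := h
      _ ≤ (1 - 1 / (n : ℝ)) ^ (n - j) := by
          apply pow_le_pow_of_le_one _ _ (by omega)
          · have : (1:ℝ)/(n:ℝ) ≤ 1 := by
              rw [div_le_one hnR]; exact_mod_cast hn4.trans' (by norm_num)
            linarith
          · have : (0:ℝ) < 1/(n:ℝ) := by positivity
            linarith
  have hbase_nonneg : (0:ℝ) ≤ 1 - 1/(n:ℝ) := by
    have : (1:ℝ)/(n:ℝ) ≤ 1 := by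
      rw [div_le_one hnR]; exact_mod_cast hn4.trans' (by norm_num)
    linarith
  calc (1 / Real.exp 1) * (3 / (4 * (k : ℝ))) ^ k
      ≤ (1 - 1 / (n : ℝ)) ^ (n - j) * ((i.choose j : ℝ) * (1 / (n : ℝ)) ^ j) := by
        apply mul_le_mul step3 (step2.trans step1) (by positivity) (by positivity)
    _ = (i.choose j : ℝ) * (1 / (n : ℝ)) ^ j * (1 - 1 / (n : ℝ)) ^ (n - j) := by ring
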